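/- arXiv:1602.07761 — 4 statements merged into one kernel-verified Lean document; each statement's English description precedes it below -/
import Mathlib

section
/- For m ≥ 0 with L - m even and m ≤ L, the number of non-negative ±1 paths of L steps from height 0 to height m equals ((m+1)/(L+1)) · binomial(L+1, (L-m)/2). -/
def pathD : ℕ → ℕ → ℕ
  | 0, 0 => 1
  | 0, _+1 => 0
  | L+1, 0 => pathD L 1
  | L+1, m+1 => pathD L m + pathD L (m+2)

lemma pathD_zero_of_lt : ∀ L m : ℕ, L < m → pathD L m = 0 := by
  intro L
  induction L with
  | zero => intro m h; match m, h with | n+1, _ => rfl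
  | succ L ih =>
    intro m h
    match m, h with
    | m+1, h => simp [pathD, ih m (by omega), ih (m+2) (by omega)]

lemma pathD_self : ∀ L, pathD L L = 1 := by
  intro L
  induction L with
  | zero => rfl
  | succ L ih => simp [pathD, ih, pathD_zero_of_lt L (L+2) (by omega)]

lemma pathD_formula : ∀ L m : ℕ, m ≤ L → (L - m) % 2 = 0 →
    ((L:ℚ)+1) * pathD L m = ((m:ℚ)+1) * ((L+1).choose ((L-m)/2)) := by
  intro L
  induction L with
  | zero =>
    intro m hm _
    interval_cases m
    norm_num [pathD]
  | succ L ih =>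
    intro m hm hpar
    match m with
    | 0 =>
      obtain ⟨j, rfl⟩ : ∃ j, L = 2*j+1 := ⟨L/2, by omega⟩
      have ih1 := ih 1 (by omega) (by omega)
      rw [show (2*j+1-1)/2 = j by omega] at ih1
      rw [show (2*j+1+1-0)/2 = j+1 by omega]
      rw [show pathD (2*j+1+1) 0 = pathD (2*j+1) 1 from rfl]
      have hrel := Nat.add_one_mul_choose_eq (2*j+2) j
      have hrelQ : ((2*j+2:ℕ)+1 : ℚ) * ((2*j+2).choose j) =
          ((2*j+2+1).choose (j+1) : ℚ) * ((j:ℚ)+1) := by exact_mod_cast hrel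
      have hne : ((2*j:ℚ)+1+1) ≠ 0 := by positivity
      apply mul_left_cancel₀ hne
      push_cast at ih1 hrelQ ⊢
      linear_combination ((2*j:ℚ)+3)*ih1 + 2*hrelQ
    | m+1 =>
      by_cases hml : m + 1 = L + 1
      · have hm' : m = L := by omega
        subst hm'
        rw [show pathD (m+1) (m+1) = 1 from pathD_self (m+1)]
        simp [show (m+1-(m+1))/2 = 0 by omega]
      · obtain ⟨k, rfl⟩ : ∃ k, L = m + 2*k + 2 := ⟨(L-m-2)/2, by omega⟩
        set L := m + 2*k + 2 with hL
        have ih1 := ih m (by omega) (by omega)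
        have ih2 := ih (m+2) (by omega) (by omega)
        rw [show (L-m)/2 = k+1 by omega] at ih1
        rw [show (L-(m+2))/2 = k by omega] at ih2
        have hpascal : (L+2).choose (k+1) = (L+1).choose k + (L+1).choose (k+1) :=
          Nat.choose_succ_succ (L+1) k
        have hrel := Nat.choose_succ_right_eq (L+1) k
        rw [show L + 1 - k = m + k + 3 by omega] at hrel
        rw [show pathD (L+1) (m+1) = pathD L m + pathD L (m+2) from rfl]
        rw [show (L+1-(m+1))/2 = k+1 by omega]
        have hpQ : ((L+2).choose (k+1) : ℚ) = (L+1).choose k + (L+1).choose (k+1) := by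
          exact_mod_cast hpascal
        have hrQ : ((L+1).choose (k+1) : ℚ) * ((k:ℚ)+1) =
            ((L+1).choose k : ℚ) * ((m:ℚ)+(k:ℚ)+3) := by exact_mod_cast hrel
        have hne : ((L:ℚ)+1) ≠ 0 := by positivity
        apply mul_left_cancel₀ hne
        push_cast [hL] at ih1 ih2 hpQ hrQ ⊢
        linear_combination ((m:ℚ)+2*k+4)*ih1 + ((m:ℚ)+2*k+4)*ih2
          - ((m:ℚ)+2*k+3)*((m:ℚ)+2)*hpQ - 2*hrQ

def pathCond (L m : ℕ) (p : Fin (L+1) → ℕ) : Prop :=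
  p 0 = 0 ∧ p (Fin.last L) = m ∧
    ∀ i : Fin L, p i.succ = p i.castSucc + 1 ∨ p i.castSucc = p i.succ + 1

lemma pathCond_restrict {L m : ℕ} {p : Fin (L+2) → ℕ} (h : pathCond (L+1) m p) :
    pathCond L (p (Fin.castSucc (Fin.last L))) (p ∘ Fin.castSucc) := by
  obtain ⟨h0, hl, hs⟩ := h
  refine ⟨?_, rfl, ?_⟩
  · simpa using h0
  · intro i
    have := hs i.castSucc
    simpa only [Function.comp_apply, Fin.succ_castSucc] using this

lemma pathCond_extend {L m v : ℕ} {q : Fin (L+1) → ℕ} (h : pathCond L v q)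
    (hv : v = m + 1 ∨ m = v + 1) :
    pathCond (L+1) m (Fin.snoc q m) := by
  obtain ⟨h0, hl, hs⟩ := h
  refine ⟨?_, by simp, ?_⟩
  · rw [show (0 : Fin (L+2)) = Fin.castSucc 0 by simp, Fin.snoc_castSucc]
    exact h0
  · intro i
    induction i using Fin.lastCases with
    | last =>
      rw [Fin.succ_last]
      simp only [Fin.snoc_last, Fin.snoc_castSucc, hl]
      tauto
    | cast j =>
      rw [Fin.succ_castSucc]
      simp only [Fin.snoc_castSucc]
      exact hs j

lemma pathCond_last_step {L m : ℕ} {p : Fin (L+2) → ℕ} (h : pathCond (L+1) m p) :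
    p (Fin.castSucc (Fin.last L)) = m + 1 ∨ m = p (Fin.castSucc (Fin.last L)) + 1 := by
  have := h.2.2 (Fin.last L)
  rw [Fin.succ_last, h.2.1] at this
  tauto

lemma pathCond_bound {L m : ℕ} {p : Fin (L+1) → ℕ} (h : pathCond L m p) :
    ∀ i : Fin (L+1), p i ≤ i := by
  intro i
  induction i using Fin.induction with
  | zero => simp [h.1]
  | succ j ih =>
    rcases h.2.2 j with hc | hc
    · rw [hc]; simpa using ih
    · have : p j.succ ≤ p j.castSucc := by omega
      calc p j.succ ≤ p j.castSucc := this
        _ ≤ j := ih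
        _ ≤ j + 1 := Nat.le_succ _

instance pathFinite (L m : ℕ) : Finite {p : Fin (L+1) → ℕ // pathCond L m p} := by
  apply Finite.of_injective (f := fun p : {p : Fin (L+1) → ℕ // pathCond L m p} =>
    (fun i => (⟨p.1 i, by
      have := pathCond_bound p.2 i
      have := i.isLt
      omega⟩ : Fin (L+1))))
  intro p q hpq
  ext i
  have := congrFun hpq i
  simpa [Fin.mk.injEq] using this

/-- Equiv for m = 0. -/
def pathEquivZero (L : ℕ) :
    {p : Fin (L+2) → ℕ // pathCond (L+1) 0 p} ≃ {q : Fin (L+1) → ℕ // pathCond L 1 q} where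
  toFun p := ⟨p.1 ∘ Fin.castSucc, by
    have hr := pathCond_restrict p.2
    have hv := pathCond_last_step p.2
    have : p.1 (Fin.castSucc (Fin.last L)) = 1 := by omega
    rwa [this] at hr⟩
  invFun q := ⟨Fin.snoc q.1 0, pathCond_extend q.2 (Or.inl rfl)⟩
  left_inv p := by
    apply Subtype.ext
    have hl : p.1 (Fin.last (L+1)) = 0 := p.2.2.1
    conv_rhs => rw [← Fin.snoc_init_self p.1]
    rw [hl]
    rfl
  right_inv q := by
    apply Subtype.ext
    funext i
    simp [Fin.snoc_castSucc]

/-- Equiv for m = m'+1. -/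
def pathEquivSucc (L m : ℕ) :
    {p : Fin (L+2) → ℕ // pathCond (L+1) (m+1) p} ≃
      {q : Fin (L+1) → ℕ // pathCond L m q} ⊕ {q : Fin (L+1) → ℕ // pathCond L (m+2) q} :=
{ toFun := fun p =>
    if h : p.1 (Fin.castSucc (Fin.last L)) = m then
      Sum.inl ⟨p.1 ∘ Fin.castSucc, by
        have hr := pathCond_restrict p.2
        rwa [h] at hr⟩
    else
      Sum.inr ⟨p.1 ∘ Fin.castSucc, by
        have hr := pathCond_restrict p.2
        have hv := pathCond_last_step p.2
        have : p.1 (Fin.castSucc (Fin.last L)) = m + 2 := by omega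
        rwa [this] at hr⟩
  invFun := fun s =>
    match s with
    | Sum.inl q => ⟨Fin.snoc q.1 (m+1), pathCond_extend q.2 (Or.inr rfl)⟩
    | Sum.inr q => ⟨Fin.snoc q.1 (m+1), pathCond_extend q.2 (Or.inl rfl)⟩
  left_inv := fun p => by
    by_cases h : p.1 (Fin.castSucc (Fin.last L)) = m <;>
      simp only [h, dif_pos, dif_neg, not_false_iff] <;>
      · apply Subtype.ext
        have hl : p.1 (Fin.last (L+1)) = m + 1 := p.2.2.1
        conv_rhs => rw [← Fin.snoc_init_self p.1]
        rw [hl]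
        rfl
  right_inv := fun s => by
    match s with
    | Sum.inl q =>
      have hq : (Fin.snoc q.1 (m+1) : Fin (L+2) → ℕ) (Fin.castSucc (Fin.last L)) = m := by
        rw [Fin.snoc_castSucc]; exact q.2.2.1
      simp only [hq, dif_pos]
      congr 1
      apply Subtype.ext
      funext i
      simp [Fin.snoc_castSucc]
    | Sum.inr q =>
      have hq : (Fin.snoc q.1 (m+1) : Fin (L+2) → ℕ) (Fin.castSucc (Fin.last L)) = m + 2 := by
        rw [Fin.snoc_castSucc]; exact q.2.2.1
      simp only [hq]
      rw [dif_neg (show (m+2 ≠ m) by omega)]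
      congr 1
      apply Subtype.ext
      funext i
      simp [Fin.snoc_castSucc] }

lemma card_pathCond : ∀ L m : ℕ,
    Nat.card {p : Fin (L+1) → ℕ // pathCond L m p} = pathD L m := by
  intro L
  induction L with
  | zero =>
    intro m
    match m with
    | 0 =>
      haveI : Unique {p : Fin 1 → ℕ // pathCond 0 0 p} :=
        { default := ⟨fun _ => 0, rfl, rfl, fun i => i.elim0⟩
          uniq := fun p => Subtype.ext (funext fun i => by
            have hi : i = 0 := Fin.fin_one_eq_zero i
            rw [hi]
            exact p.2.1) }
      rw [show pathD 0 0 = 1 from rfl]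
      exact Nat.card_unique
    | m+1 =>
      haveI : IsEmpty {p : Fin 1 → ℕ // pathCond 0 (m+1) p} := by
        constructor
        rintro ⟨p, h0, hl, -⟩
        rw [show Fin.last 0 = 0 from rfl, h0] at hl
        exact Nat.succ_ne_zero m hl.symm
      simp [Nat.card_of_isEmpty, pathD]
  | succ L ih =>
    intro m
    match m with
    | 0 =>
      rw [Nat.card_congr (pathEquivZero L), ih 1]
      rfl
    | m+1 =>
      rw [Nat.card_congr (pathEquivSucc L m), Nat.card_sum, ih m, ih (m+2)]
      rfl

theorem stmt4 (L m : ℕ) (hm : m ≤ L) (hpar : (L - m) % 2 = 0) :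
    Nat.card {p : Fin (L + 1) → ℕ //
        p 0 = 0 ∧ p (Fin.last L) = m ∧
        ∀ i : Fin L, p i.succ = p i.castSucc + 1 ∨ p i.castSucc = p i.succ + 1} =
      (m + 1) * (L + 1).choose ((L - m) / 2) / (L + 1) := by
  have hcard : Nat.card {p : Fin (L + 1) → ℕ //
        p 0 = 0 ∧ p (Fin.last L) = m ∧
        ∀ i : Fin L, p i.succ = p i.castSucc + 1 ∨ p i.castSucc = p i.succ + 1}
      = pathD L m := card_pathCond L m
  rw [hcard]
  have hQ := pathD_formula L m hm hpar
  have hN : (L + 1) * pathD L m = (m + 1) * (L + 1).choose ((L - m) / 2) := by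
    exact_mod_cast hQ
  rw [← hN, Nat.mul_div_cancel_left _ (Nat.succ_pos L)]
end

section
/- The Motzkin number M_{2n} (the number of Motzkin paths of length 2n) satisfies M_{2n} = (1/(2n+1)) Σ_{i=0}^{n} (2n+1)! / ((2n-2i)! · i! · (i+1)!). -/
open DyckStep List

namespace Stmt7

def cond (c : ℕ) (l : List (Option DyckStep)) : Prop :=
  (∀ k, (l.take k).count (some D) ≤ (l.take k).count (some U) + c) ∧
  l.count (some D) = l.count (some U) + c

abbrev MS (m c : ℕ) : Type := {l : List (Option DyckStep) // l.length = m ∧ cond c l}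
abbrev DS (m c : ℕ) : Type :=
  {l : List (Option DyckStep) // l.length = m ∧ cond c l ∧ none ∉ l}

instance : Fintype DyckStep := ⟨{U, D}, fun x => by cases x <;> simp⟩

lemma finite_aux {α : Type*} [Finite α] (m : ℕ) (P : List α → Prop) :
    Finite {l : List α // l.length = m ∧ P l} := by
  apply Finite.of_injective
    (f := fun l => fun i : Fin m => l.1.get ⟨i.1, by rw [l.2.1]; exact i.2⟩)
  intro a b h
  ext1
  apply List.ext_get (by rw [a.2.1, b.2.1])
  intro i h1 h2
  have := congrFun h ⟨i, by rw [← a.2.1]; exact h1⟩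
  simpa using this

instance (m c : ℕ) : Finite (MS m c) := finite_aux m _
instance (m c : ℕ) : Finite (DS m c) :=
  finite_aux (α := Option DyckStep) m (fun l => cond c l ∧ none ∉ l)

lemma cond_none_cons {c : ℕ} {t : List (Option DyckStep)} :
    cond c (none :: t) ↔ cond c t := by
  constructor
  · rintro ⟨h1, h2⟩
    refine ⟨fun k => ?_, by simpa using h2⟩
    have := h1 (k + 1)
    simpa using this
  · rintro ⟨h1, h2⟩
    refine ⟨fun k => ?_, by simpa using h2⟩
    cases k with
    | zero => simp
    | succ k => simpa using h1 k

lemma cond_U_cons {c : ℕ} {t : List (Option DyckStep)} :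
    cond c (some U :: t) ↔ cond (c + 1) t := by
  constructor
  · rintro ⟨h1, h2⟩
    refine ⟨fun k => ?_, ?_⟩
    · have := h1 (k + 1); simp [count_cons] at this ⊢; omega
    · simp [count_cons] at h2; omega
  · rintro ⟨h1, h2⟩
    refine ⟨fun k => ?_, ?_⟩
    · cases k with
      | zero => simp
      | succ k => have := h1 k; simp [count_cons] at this ⊢; omega
    · simp [count_cons]; omega

lemma cond_D_cons {c : ℕ} {t : List (Option DyckStep)} :
    cond (c + 1) (some D :: t) ↔ cond c t := by
  constructor
  · rintro ⟨h1, h2⟩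
    refine ⟨fun k => ?_, ?_⟩
    · have := h1 (k + 1); simp [count_cons] at this ⊢; omega
    · simp [count_cons] at h2; omega
  · rintro ⟨h1, h2⟩
    refine ⟨fun k => ?_, ?_⟩
    · cases k with
      | zero => simp
      | succ k => have := h1 k; simp [count_cons] at this ⊢; omega
    · simp [count_cons]; omega

lemma not_cond_D_cons_zero {t : List (Option DyckStep)} : ¬ cond 0 (some D :: t) := by
  rintro ⟨h1, -⟩
  have := h1 1
  simp at this


lemma MS_card_succ (m c : ℕ) :
    Nat.card (MS (m + 1) (c + 1)) =
      Nat.card (MS m (c + 1)) + (Nat.card (MS m (c + 2)) + Nat.card (MS m c)) := by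
  rw [← Nat.card_sum, ← Nat.card_sum]
  symm
  apply Nat.card_eq_of_bijective
    (f := fun x => Sum.elim
      (fun t => (⟨none :: t.1, by simp [t.2.1], cond_none_cons.2 t.2.2⟩ : MS (m+1) (c+1)))
      (Sum.elim
        (fun t => ⟨some U :: t.1, by simp [t.2.1], cond_U_cons.2 t.2.2⟩)
        (fun t => ⟨some D :: t.1, by simp [t.2.1], cond_D_cons.2 t.2.2⟩)) x)
  constructor
  · rintro (a | a | a) (b | b | b) h <;>
      simp only [Sum.elim_inl, Sum.elim_inr, Subtype.mk.injEq, List.cons.injEq] at h <;>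
      first
        | (exact congrArg Sum.inl (Subtype.ext h.2))
        | (exact congrArg Sum.inr (congrArg Sum.inl (Subtype.ext h.2)))
        | (exact congrArg Sum.inr (congrArg Sum.inr (Subtype.ext h.2)))
        | (exact congrArg Sum.inr (Subtype.ext h.2))
        | (exact congrArg Sum.inl (Subtype.ext h))
        | (exact congrArg Sum.inr (Subtype.ext h))
        | (exact Subtype.ext h)
        | (exact Subtype.ext h.2)
        | simp_all
  · rintro ⟨l, hl, hc⟩
    match l, hl with
    | none :: t, hl => exact ⟨Sum.inl ⟨t, by simpa using hl, cond_none_cons.1 hc⟩, rfl⟩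
    | some U :: t, hl => exact ⟨Sum.inr (Sum.inl ⟨t, by simpa using hl, cond_U_cons.1 hc⟩), rfl⟩
    | some D :: t, hl => exact ⟨Sum.inr (Sum.inr ⟨t, by simpa using hl, cond_D_cons.1 hc⟩), rfl⟩

lemma MS_card_succ_zero (m : ℕ) :
    Nat.card (MS (m + 1) 0) = Nat.card (MS m 0) + Nat.card (MS m 1) := by
  rw [← Nat.card_sum]
  symm
  apply Nat.card_eq_of_bijective
    (f := fun x => Sum.elim
      (fun t => (⟨none :: t.1, by simp [t.2.1], cond_none_cons.2 t.2.2⟩ : MS (m+1) 0))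
      (fun t => ⟨some U :: t.1, by simp [t.2.1], cond_U_cons.2 t.2.2⟩) x)
  constructor
  · rintro (a | a) (b | b) h <;>
      simp only [Sum.elim_inl, Sum.elim_inr, Subtype.mk.injEq, List.cons.injEq] at h <;>
      first
        | (exact congrArg Sum.inl (Subtype.ext h.2))
        | (exact congrArg Sum.inr (congrArg Sum.inl (Subtype.ext h.2)))
        | (exact congrArg Sum.inr (congrArg Sum.inr (Subtype.ext h.2)))
        | (exact congrArg Sum.inr (Subtype.ext h.2))
        | (exact congrArg Sum.inl (Subtype.ext h))
        | (exact congrArg Sum.inr (Subtype.ext h))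
        | (exact Subtype.ext h)
        | (exact Subtype.ext h.2)
        | simp_all
  · rintro ⟨l, hl, hc⟩
    match l, hl with
    | none :: t, hl => exact ⟨Sum.inl ⟨t, by simpa using hl, cond_none_cons.1 hc⟩, rfl⟩
    | some U :: t, hl => exact ⟨Sum.inr ⟨t, by simpa using hl, cond_U_cons.1 hc⟩, rfl⟩
    | some D :: t, hl => exact absurd hc not_cond_D_cons_zero

lemma DS_card_succ (m c : ℕ) :
    Nat.card (DS (m + 1) (c + 1)) = Nat.card (DS m (c + 2)) + Nat.card (DS m c) := by
  rw [← Nat.card_sum]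
  symm
  apply Nat.card_eq_of_bijective
    (f := fun x => Sum.elim
      (fun t => (⟨some U :: t.1, by simp [t.2.1], cond_U_cons.2 t.2.2.1, by simp [t.2.2.2]⟩ :
        DS (m+1) (c+1)))
      (fun t => ⟨some D :: t.1, by simp [t.2.1], cond_D_cons.2 t.2.2.1, by simp [t.2.2.2]⟩) x)
  constructor
  · rintro (a | a) (b | b) h <;>
      simp only [Sum.elim_inl, Sum.elim_inr, Subtype.mk.injEq, List.cons.injEq] at h <;>
      first
        | (exact congrArg Sum.inl (Subtype.ext h.2))
        | (exact congrArg Sum.inr (congrArg Sum.inl (Subtype.ext h.2)))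
        | (exact congrArg Sum.inr (congrArg Sum.inr (Subtype.ext h.2)))
        | (exact congrArg Sum.inr (Subtype.ext h.2))
        | (exact congrArg Sum.inl (Subtype.ext h))
        | (exact congrArg Sum.inr (Subtype.ext h))
        | (exact Subtype.ext h)
        | (exact Subtype.ext h.2)
        | simp_all
  · rintro ⟨l, hl, hc, hn⟩
    match l, hl with
    | none :: t, hl => exact absurd (by simp) hn
    | some U :: t, hl =>
        exact ⟨Sum.inl ⟨t, by simpa using hl, cond_U_cons.1 hc, fun h => hn (by simp [h])⟩, rfl⟩
    | some D :: t, hl =>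
        exact ⟨Sum.inr ⟨t, by simpa using hl, cond_D_cons.1 hc, fun h => hn (by simp [h])⟩, rfl⟩

lemma DS_card_succ_zero (m : ℕ) : Nat.card (DS (m + 1) 0) = Nat.card (DS m 1) := by
  symm
  apply Nat.card_eq_of_bijective
    (f := fun t => (⟨some U :: t.1, by simp [t.2.1], cond_U_cons.2 t.2.2.1, by simp [t.2.2.2]⟩ :
      DS (m+1) 0))
  constructor
  · rintro a b h
    simp only [Subtype.mk.injEq, List.cons.injEq] at h
    exact Subtype.ext h.2
  · rintro ⟨l, hl, hc, hn⟩
    match l, hl with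
    | none :: t, hl => exact absurd (by simp) hn
    | some U :: t, hl =>
        exact ⟨⟨t, by simpa using hl, cond_U_cons.1 hc, fun h => hn (by simp [h])⟩, rfl⟩
    | some D :: t, hl => exact absurd hc not_cond_D_cons_zero

lemma MS_card_zero (c : ℕ) : Nat.card (MS 0 c) = if c = 0 then 1 else 0 := by
  split
  · subst ‹c = 0›
    rw [Nat.card_eq_one_iff_unique]
    constructor
    · constructor
      rintro ⟨a, ha, -⟩ ⟨b, hb, -⟩
      apply Subtype.ext
      rw [List.length_eq_zero_iff] at ha hb
      simp [ha, hb]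
    · exact ⟨⟨[], rfl, fun k => by simp, by simp⟩⟩
  · have : IsEmpty (MS 0 c) := by
      constructor
      rintro ⟨l, hl, -, hc⟩
      rw [List.length_eq_zero_iff] at hl
      subst hl
      simp at hc
      omega
    exact Nat.card_of_isEmpty

lemma DS_card_zero (c : ℕ) : Nat.card (DS 0 c) = if c = 0 then 1 else 0 := by
  split
  · subst ‹c = 0›
    rw [Nat.card_eq_one_iff_unique]
    constructor
    · constructor
      rintro ⟨a, ha, -⟩ ⟨b, hb, -⟩
      apply Subtype.ext
      rw [List.length_eq_zero_iff] at ha hb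
      simp [ha, hb]
    · exact ⟨⟨[], rfl, ⟨fun k => by simp, by simp⟩, by simp⟩⟩
  · have : IsEmpty (DS 0 c) := by
      constructor
      rintro ⟨l, hl, ⟨-, hc⟩, -⟩
      rw [List.length_eq_zero_iff] at hl
      subst hl
      simp at hc
      omega
    exact Nat.card_of_isEmpty

lemma DS_card_of_lt {m c : ℕ} (h : m < c) : Nat.card (DS m c) = 0 := by
  have : IsEmpty (DS m c) := by
    constructor
    rintro ⟨l, hl, ⟨-, hc⟩, -⟩
    have h2 : l.count (some D) ≤ l.length := List.count_le_length
    omega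
  exact Nat.card_of_isEmpty


lemma MS_card_eq (m : ℕ) : ∀ c : ℕ, Nat.card (MS m c) =
    ∑ j ∈ Finset.range (m + 1), m.choose (2 * j + c) * Nat.card (DS (2 * j + c) c) := by
  induction m with
  | zero =>
    intro c
    rw [Finset.sum_range_one, MS_card_zero]
    match c with
    | 0 => simp [DS_card_zero]
    | c + 1 => simp
  | succ m IH =>
    intro c
    match c with
    | 0 =>
      rw [MS_card_succ_zero, IH 0, IH 1]
      have hR : ∑ j ∈ Finset.range (m + 2),
            (m + 1).choose (2 * j + 0) * Nat.card (DS (2 * j + 0) 0)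
          = (∑ j ∈ Finset.range (m + 1),
              (m.choose (2 * j + 1) * Nat.card (DS (2 * j + 1) 1)
                + m.choose (2 * j + 2) * Nat.card (DS (2 * j + 1) 1)))
              + Nat.card (DS 0 0) := by
        rw [Finset.sum_range_succ']
        simp only [Nat.add_zero, Nat.mul_zero, Nat.choose_zero_right, one_mul]
        congr 1
        apply Finset.sum_congr rfl
        intro j _
        have e1 : 2 * (j + 1) = 2 * j + 1 + 1 := by ring
        rw [e1, Nat.choose_succ_succ, DS_card_succ_zero]
        have e2 : 2 * j + 1 + 1 = 2 * j + 2 := rfl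
        rw [e2]
        ring
      rw [hR, Finset.sum_add_distrib]
      -- LHS : Σ C(m,2j) Dc(2j)0 + Σ C(m,2j+1) Dc(2j+1)1
      have hL : ∑ j ∈ Finset.range (m + 1), m.choose (2 * j + 0) * Nat.card (DS (2 * j + 0) 0)
          = (∑ j ∈ Finset.range (m + 1),
              m.choose (2 * j + 2) * Nat.card (DS (2 * j + 1) 1))
              + Nat.card (DS 0 0) := by
        rw [Finset.sum_range_succ']
        simp only [Nat.add_zero, Nat.mul_zero, Nat.choose_zero_right, one_mul]
        rw [Finset.sum_range_succ, Nat.choose_eq_zero_of_lt (by omega), zero_mul, add_zero]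
        congr 1
        apply Finset.sum_congr rfl
        intro j _
        have e1 : 2 * (j + 1) = 2 * j + 1 + 1 := by ring
        rw [e1, DS_card_succ_zero]
      rw [hL]
      omega
    | c + 1 =>
      rw [MS_card_succ, IH (c + 1), IH (c + 2), IH c]
      have hR : ∑ j ∈ Finset.range (m + 2),
            (m + 1).choose (2 * j + (c + 1)) * Nat.card (DS (2 * j + (c + 1)) (c + 1))
          = ∑ j ∈ Finset.range (m + 2),
              (m.choose (2 * j + (c + 1)) * Nat.card (DS (2 * j + (c + 1)) (c + 1))
                + (m.choose (2 * j + c) * Nat.card (DS (2 * j + c) (c + 2))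
                  + m.choose (2 * j + c) * Nat.card (DS (2 * j + c) c))) := by
        apply Finset.sum_congr rfl
        intro j _
        have e1 : 2 * j + (c + 1) = (2 * j + c) + 1 := rfl
        rw [e1, Nat.choose_succ_succ, DS_card_succ]
        ring
      rw [hR, Finset.sum_add_distrib, Finset.sum_add_distrib]
      have h1 : ∑ j ∈ Finset.range (m + 2),
            m.choose (2 * j + (c + 1)) * Nat.card (DS (2 * j + (c + 1)) (c + 1))
          = ∑ j ∈ Finset.range (m + 1),
            m.choose (2 * j + (c + 1)) * Nat.card (DS (2 * j + (c + 1)) (c + 1)) := by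
        rw [Finset.sum_range_succ, Nat.choose_eq_zero_of_lt (by omega), zero_mul, add_zero]
      have h3 : ∑ j ∈ Finset.range (m + 2),
            m.choose (2 * j + c) * Nat.card (DS (2 * j + c) c)
          = ∑ j ∈ Finset.range (m + 1),
            m.choose (2 * j + c) * Nat.card (DS (2 * j + c) c) := by
        rw [Finset.sum_range_succ, Nat.choose_eq_zero_of_lt (by omega), zero_mul, add_zero]
      have h2 : ∑ j ∈ Finset.range (m + 2),
            m.choose (2 * j + c) * Nat.card (DS (2 * j + c) (c + 2))
          = ∑ j ∈ Finset.range (m + 1),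
            m.choose (2 * j + (c + 2)) * Nat.card (DS (2 * j + (c + 2)) (c + 2)) := by
        rw [Finset.sum_range_succ']
        rw [DS_card_of_lt (by omega), mul_zero, add_zero]
        apply Finset.sum_congr rfl
        intro j _
        have e1 : 2 * (j + 1) + c = 2 * j + (c + 2) := by ring
        rw [e1]
      rw [h1, h2, h3]
      try omega

lemma ds_len (L : List DyckStep) : L.length = L.count U + L.count D := by
  induction L with
  | nil => simp
  | cons x t ih =>
    cases x <;> simp [List.count_cons, ih] <;> omega

lemma count_map_some (L : List DyckStep) (x : DyckStep) :
    (L.map some).count (some x) = L.count x := by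
  induction L with
  | nil => simp
  | cons a t ih => simp [List.count_cons, ih]

lemma DS_card_catalan (j : ℕ) : Nat.card (DS (2 * j) 0) = catalan j := by
  rw [← DyckWord.card_dyckWord_semilength_eq_catalan, ← Nat.card_eq_fintype_card]
  symm
  apply Nat.card_eq_of_bijective (f := fun w => (⟨w.1.toList.map some, by
      rw [List.length_map, ← w.1.two_mul_semilength_eq_length, w.2], by
      constructor
      · intro k
        rw [← List.map_take, count_map_some, count_map_some, Nat.add_zero]
        exact w.1.count_D_le_count_U k
      · rw [count_map_some, count_map_some, Nat.add_zero]
        exact w.1.count_U_eq_count_D.symm, by simp⟩ : DS (2 * j) 0))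
  constructor
  · intro a b h
    simp only [Subtype.mk.injEq] at h
    have := List.map_injective_iff.2 (fun x y => by simp) h
    exact Subtype.ext (DyckWord.ext this)
  · rintro ⟨l, hl, hc, hn⟩
    have hex : ∀ l' : List (Option DyckStep), none ∉ l' → ∃ L : List DyckStep, l' = L.map some := by
      intro l' hn'
      induction l' with
      | nil => exact ⟨[], rfl⟩
      | cons x t ih =>
        match x with
        | none => exact absurd (by simp) hn'
        | some a =>
          obtain ⟨L, hL⟩ := ih (fun h => hn' (by simp [h]))
          exact ⟨a :: L, by simp [hL]⟩
    obtain ⟨L, rfl⟩ := hex l hn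
    have hcU : ∀ k, (L.take k).count D ≤ (L.take k).count U := by
      intro k
      have := hc.1 k
      rw [← List.map_take, count_map_some, count_map_some] at this
      omega
    have hcE : L.count U = L.count D := by
      have := hc.2
      rw [count_map_some, count_map_some] at this
      omega
    refine ⟨⟨⟨L, hcE, hcU⟩, ?_⟩, rfl⟩
    have hlen := ds_len L
    rw [List.length_map] at hl
    show L.count U = j
    omega

def stp (m : ℕ) (p : Fin (m + 1) → ℕ) (i : Fin m) : Option DyckStep :=
  if p i.succ = p i.castSucc + 1 then some U
  else if p i.castSucc = p i.succ + 1 then some D else none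

lemma take_ofFn_succ (m : ℕ) (f : Fin m → Option DyckStep) (i : Fin m) :
    (List.ofFn f).take (i.1 + 1) = (List.ofFn f).take i.1 ++ [f i] := by
  rw [List.take_succ]
  congr
  have h : i.1 < (List.ofFn f).length := by simp [i.2]
  rw [List.getElem?_eq_getElem h]
  simp

lemma key (m : ℕ) (p : Fin (m + 1) → ℕ) (h0 : p 0 = 0)
    (hstep : ∀ i : Fin m, p i.succ = p i.castSucc + 1 ∨ p i.succ = p i.castSucc ∨
      p i.castSucc = p i.succ + 1) :
    ∀ i : Fin (m + 1), ((List.ofFn (stp m p)).take i.1).count (some U)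
      = p i + ((List.ofFn (stp m p)).take i.1).count (some D) := by
  intro i
  induction i using Fin.induction with
  | zero => simp [h0]
  | succ i ih =>
    rw [Fin.val_succ, take_ofFn_succ m (stp m p) i]
    rw [Fin.coe_castSucc] at ih
    rcases hstep i with h | h | h
    · rw [stp, if_pos h]
      simp [List.count_append, List.count_cons]
      omega
    · have h1 : ¬ p i.succ = p i.castSucc + 1 := by omega
      have h2 : ¬ p i.castSucc = p i.succ + 1 := by omega
      rw [stp, if_neg h1, if_neg h2]
      simp [List.count_append, List.count_cons]
      omega
    · have h1 : ¬ p i.succ = p i.castSucc + 1 := by omega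
      rw [stp, if_neg h1, if_pos h]
      simp [List.count_append, List.count_cons]
      omega

lemma card_paths (m : ℕ) :
    Nat.card {p : Fin (m + 1) → ℕ // p 0 = 0 ∧ p (Fin.last m) = 0 ∧
      ∀ i : Fin m, p i.succ = p i.castSucc + 1 ∨ p i.succ = p i.castSucc ∨
        p i.castSucc = p i.succ + 1} = Nat.card (MS m 0) := by
  apply Nat.card_eq_of_bijective (f := fun q =>
    (⟨List.ofFn (stp m q.1), by simp, by
      have hk := key m q.1 q.2.1 q.2.2.2
      constructor
      · intro k
        rcases le_or_gt k m with hkm | hkm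
        · have := hk ⟨k, Nat.lt_succ_of_le hkm⟩
          simp only at this
          omega
        · rw [List.take_of_length_le (by simp; omega)]
          have := hk (Fin.last m)
          rw [List.take_of_length_le (by simp)] at this
          rw [q.2.2.1] at this
          omega
      · have := hk (Fin.last m)
        rw [List.take_of_length_le (by simp)] at this
        rw [q.2.2.1] at this
        omega⟩ : MS m 0))
  constructor
  · rintro ⟨p, hp0, hpl, hps⟩ ⟨q, hq0, hql, hqs⟩ h
    simp only [Subtype.mk.injEq] at h
    apply Subtype.ext
    funext i
    show p i = q i
    have k1 := key m p hp0 hps i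
    have k2 := key m q hq0 hqs i
    rw [h] at k1
    omega
  · rintro ⟨l, hl, hc⟩
    have hpre : ∀ k, (l.take k).count (some D) ≤ (l.take k).count (some U) := by
      intro k
      have := hc.1 k
      omega
    refine ⟨⟨fun i => (l.take i.1).count (some U) - (l.take i.1).count (some D),
      by simp, ?_, ?_⟩, ?_⟩
    · show (l.take (Fin.last m).1).count (some U) - (l.take (Fin.last m).1).count (some D) = 0
      rw [List.take_of_length_le (by simp [hl])]
      have := hc.2
      omega
    · intro i
      have hilen : i.1 < l.length := by rw [hl]; exact i.2
      have hts : l.take (i.1 + 1) = l.take i.1 ++ [l[i.1]] := by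
        rw [List.take_succ, List.getElem?_eq_getElem hilen]
        simp
      have e1 : i.succ.1 = i.1 + 1 := rfl
      have e2 : i.castSucc.1 = i.1 := rfl
      simp only [e1, e2, hts, List.count_append, List.count_cons, List.count_nil]
      have hp1 := hpre i.1
      have hp2 := hpre (i.1 + 1)
      rw [hts, List.count_append, List.count_append] at hp2
      rcases hx : l[i.1] with _ | s
      · simp [hx]
      · cases s <;> simp [hx] <;> omega
    · apply Subtype.ext
      simp only
      apply List.ext_getElem (by simp [hl])
      intro k h1 h2
      rw [List.getElem_ofFn]
      have hkm : k < m := by simpa using h1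
      have hts : l.take (k + 1) = l.take k ++ [l[k]] := by
        rw [List.take_succ, List.getElem?_eq_getElem h2]
        simp
      have hp1 := hpre k
      have hp2 := hpre (k + 1)
      rw [hts, List.count_append, List.count_append] at hp2
      rw [stp]
      have ev : ∀ (h' : k < m), ((⟨k, h'⟩ : Fin m).succ : Fin (m+1)).1 = k + 1 := fun _ => rfl
      rcases hx : l[k] with _ | s
      · rw [if_neg, if_neg]
        · show ¬ ((l.take _).count (some U) - (l.take _).count (some D) = _)
          simp only [ev, Fin.coe_castSucc, Fin.val_mk, hts, hx, List.count_append,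
            List.count_cons, List.count_nil]
          simp [hx] at hp2 ⊢
          all_goals omega
        · show ¬ ((l.take _).count (some U) - (l.take _).count (some D) = _)
          simp only [ev, Fin.coe_castSucc, Fin.val_mk, hts, hx, List.count_append,
            List.count_cons, List.count_nil]
          simp [hx] at hp2 ⊢
          all_goals omega
      · cases s
        · rw [if_pos]
          show ((l.take _).count (some U) - (l.take _).count (some D) = _)
          simp only [ev, Fin.coe_castSucc, Fin.val_mk, hts, hx, List.count_append,
            List.count_cons, List.count_nil]
          simp [hx] at hp2 ⊢
          all_goals omega
        · rw [if_neg, if_pos]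
          · show ((l.take _).count (some U) - (l.take _).count (some D) = _)
            simp only [ev, Fin.coe_castSucc, Fin.val_mk, hts, hx, List.count_append,
              List.count_cons, List.count_nil]
            simp [hx] at hp2 ⊢
            all_goals omega
          · show ¬ ((l.take _).count (some U) - (l.take _).count (some D) = _)
            simp only [ev, Fin.coe_castSucc, Fin.val_mk, hts, hx, List.count_append,
              List.count_cons, List.count_nil]
            simp [hx] at hp2 ⊢
            all_goals omega

lemma term_eq (n i : ℕ) (hi : i ≤ n) :
    (2 * n + 1).factorial / ((2 * n - 2 * i).factorial * i.factorial * (i + 1).factorial)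
      = (2 * n + 1) * ((2 * n).choose (2 * i) * catalan i) := by
  apply Nat.div_eq_of_eq_mul_left
  · positivity
  have h2i : 2 * i ≤ 2 * n := by omega
  have h1 := Nat.choose_mul_factorial_mul_factorial h2i
  have h3 := Nat.choose_mul_factorial_mul_factorial (show i ≤ 2 * i by omega)
  rw [show 2 * i - i = i by omega] at h3
  have h2 := succ_mul_catalan_eq_centralBinom i
  have hcb : Nat.centralBinom i = (2 * i).choose i := rfl
  have hmid : catalan i * ((i + 1) * i.factorial) * i.factorial = (2 * i).factorial := by
    rw [show catalan i * ((i + 1) * i.factorial) * i.factorial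
        = ((i + 1) * catalan i) * i.factorial * i.factorial by ring, h2, hcb]
    exact h3
  rw [Nat.factorial_succ (2 * n), Nat.factorial_succ i]
  calc (2 * n + 1) * (2 * n).factorial
      = (2 * n + 1) * ((2 * n).choose (2 * i) * (2 * i).factorial
          * (2 * n - 2 * i).factorial) := by rw [h1]
    _ = (2 * n + 1) * ((2 * n).choose (2 * i)
          * (catalan i * ((i + 1) * i.factorial) * i.factorial)
          * (2 * n - 2 * i).factorial) := by rw [hmid]
    _ = (2 * n + 1) * ((2 * n).choose (2 * i) * catalan i)
          * ((2 * n - 2 * i).factorial * i.factorial * ((i + 1) * i.factorial)) := by ring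


end Stmt7

open Stmt7 in
theorem stmt7 (n : ℕ) :
    Nat.card {p : Fin (2 * n + 1) → ℕ //
        p 0 = 0 ∧ p (Fin.last (2 * n)) = 0 ∧
        ∀ i : Fin (2 * n), p i.succ = p i.castSucc + 1 ∨ p i.succ = p i.castSucc ∨
          p i.castSucc = p i.succ + 1} =
      (∑ i ∈ Finset.range (n + 1),
          (2 * n + 1).factorial /
            ((2 * n - 2 * i).factorial * i.factorial * (i + 1).factorial)) /
        (2 * n + 1) := by
  have hsum : ∑ i ∈ Finset.range (n + 1),
      (2 * n + 1).factorial / ((2 * n - 2 * i).factorial * i.factorial * (i + 1).factorial)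
      = (2 * n + 1) * ∑ i ∈ Finset.range (n + 1), (2 * n).choose (2 * i) * catalan i := by
    rw [Finset.mul_sum]
    exact Finset.sum_congr rfl fun i hi =>
      term_eq n i (by have := Finset.mem_range.1 hi; omega)
  rw [hsum, Nat.mul_div_cancel_left _ (by omega)]
  rw [card_paths (2 * n), MS_card_eq (2 * n) 0]
  simp only [Nat.add_zero]
  have hDS : ∀ j, Nat.card (DS (2 * j) 0) = catalan j := DS_card_catalan
  rw [Finset.sum_congr rfl (fun j _ => by rw [hDS j])]
  symm
  apply Finset.sum_subset
  · intro x hx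
    simp only [Finset.mem_range] at hx ⊢
    omega
  · intro x hx hnx
    simp only [Finset.mem_range] at hx hnx
    rw [Nat.choose_eq_zero_of_lt (by omega), zero_mul]
end

section
/- For m ≥ 0 and n₁ ≥ m, the number of non-negative Motzkin-like paths of n₁ steps from height 0 to height m equals ((m+1)/(n₁+1)) · Σ_{i≥0} (n₁+1)! / ((n₁-2i-m)! · i! · (i+m+1)!), where the sum ranges over i with 2i + m ≤ n₁. -/
/-- choose with integer (possibly negative) lower index -/
def ch (a : ℕ) (b : ℤ) : ℕ := if 0 ≤ b then a.choose b.toNat else 0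

lemma ch_pascal (a : ℕ) (b : ℤ) : ch (a+1) b = ch a b + ch a (b-1) := by
  unfold ch
  rcases lt_trichotomy b 0 with h | h | h
  · rw [if_neg (by omega), if_neg (by omega), if_neg (by omega)]
  · subst h; simp
  · rw [if_pos (by omega), if_pos (by omega), if_pos (by omega)]
    have : b.toNat = (b-1).toNat + 1 := by omega
    rw [this, Nat.choose_succ_succ', ← this]
    exact Nat.add_comm _ _

def S (n : ℕ) (k : ℤ) : ℕ := ∑ i ∈ Finset.range (n+1), n.choose i * ch (n - i) (i + k)

lemma S_zero (k : ℤ) : S 0 k = if k = 0 then 1 else 0 := by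
  unfold S ch
  rcases lt_trichotomy k 0 with h | h | h
  · simp [if_neg (by omega : ¬ k = 0)]
    intro h'; omega
  · subst h; simp
  · rw [if_neg (by omega)]
    simp only [Finset.sum_range_one, Nat.choose_zero_right, one_mul, Nat.zero_sub, zero_add]
    rw [if_pos (by omega)]
    apply Nat.choose_eq_zero_of_lt
    omega

lemma S_rec (n : ℕ) (k : ℤ) : S (n+1) k = S n (k-1) + S n k + S n (k+1) := by
  have e1 : S (n+1) k
      = (∑ i ∈ Finset.range (n+1), (n+1).choose (i+1) * ch (n-i) ((i:ℤ)+1+k)) + ch (n+1) k := by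
    unfold S
    rw [Finset.sum_range_succ']
    congr 1
    · apply Finset.sum_congr rfl
      intro i _
      have h1 : n+1-(i+1) = n-i := by omega
      rw [h1]
      congr 1
    · simp
  have e2 : ∀ i ∈ Finset.range (n+1), (n+1).choose (i+1) * ch (n-i) ((i:ℤ)+1+k)
      = n.choose i * ch (n-i) ((i:ℤ)+(k+1)) + n.choose (i+1) * ch (n-i) ((i:ℤ)+1+k) := by
    intro i _
    rw [Nat.choose_succ_succ, Nat.add_mul]
    have h2 : (i:ℤ)+(k+1) = (i:ℤ)+1+k := by ring
    rw [h2]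
  -- the shifted sum B
  have e3 : (∑ i ∈ Finset.range (n+1), n.choose (i+1) * ch (n-i) ((i:ℤ)+1+k)) + ch (n+1) k
      = S n k + S n (k-1) := by
    have hfull : ∑ j ∈ Finset.range (n+2), n.choose j * ch (n+1-j) ((j:ℤ)+k)
        = (∑ i ∈ Finset.range (n+1), n.choose (i+1) * ch (n-i) ((i:ℤ)+1+k)) + ch (n+1) k := by
      rw [Finset.sum_range_succ']
      congr 1
      · apply Finset.sum_congr rfl
        intro i _
        have h1 : n+1-(i+1) = n-i := by omega
        rw [h1]
        congr 1
      · simp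
    have htop : ∑ j ∈ Finset.range (n+2), n.choose j * ch (n+1-j) ((j:ℤ)+k)
        = ∑ j ∈ Finset.range (n+1), n.choose j * ch (n+1-j) ((j:ℤ)+k) := by
      rw [Finset.sum_range_succ, Nat.choose_succ_self, Nat.zero_mul, Nat.add_zero]
    have hpas : ∀ j ∈ Finset.range (n+1), n.choose j * ch (n+1-j) ((j:ℤ)+k)
        = n.choose j * ch (n-j) ((j:ℤ)+k) + n.choose j * ch (n-j) ((j:ℤ)+(k-1)) := by
      intro j hj
      rw [Finset.mem_range] at hj
      have h1 : n+1-j = (n-j)+1 := by omega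
      have h2 : (j:ℤ)+k-1 = (j:ℤ)+(k-1) := by ring
      rw [h1, ch_pascal, h2, Nat.mul_add]
    rw [← hfull, htop, Finset.sum_congr rfl hpas, Finset.sum_add_distrib]
    rfl
  have e4 : ∑ i ∈ Finset.range (n+1), n.choose i * ch (n-i) ((i:ℤ)+(k+1)) = S n (k+1) := rfl
  have e5 := Finset.sum_congr rfl e2
  rw [Finset.sum_add_distrib] at e5
  omega

lemma S_symm (n : ℕ) : ∀ k : ℤ, S n (-k) = S n k := by
  induction n with
  | zero => intro k; rw [S_zero, S_zero]; simp [neg_eq_zero]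
  | succ n ih =>
    intro k
    rw [S_rec, S_rec]
    have h1 : -k - 1 = -(k+1) := by ring
    have h2 : -k + 1 = -(k-1) := by ring
    rw [h1, h2, ih, ih, ih]
    omega

def Npath : ℕ → ℕ → ℕ
  | 0, m => if m = 0 then 1 else 0
  | n+1, m => Npath n (m+1) + Npath n m + (if m = 0 then 0 else Npath n (m-1))

lemma refl_id (n : ℕ) : ∀ m : ℕ, Npath n m + S n ((m:ℤ)+2) = S n (m:ℤ) := by
  induction n with
  | zero =>
    intro m
    rw [S_zero, S_zero]
    simp only [Npath]
    rcases Nat.eq_zero_or_pos m with h | h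
    · subst h; norm_num
    · rw [if_neg (by omega), if_neg (by omega), if_neg (by omega)]
  | succ n ih =>
    intro m
    rw [S_rec, S_rec]
    rcases Nat.eq_zero_or_pos m with h | h
    · subst h
      have h0 := ih 0
      have h1 := ih 1
      have hs : S n (-1) = S n 1 := S_symm n 1
      simp only [Npath, if_pos rfl]
      push_cast at h0 h1 ⊢
      ring_nf at h0 h1 hs ⊢
      omega
    · obtain ⟨m', rfl⟩ : ∃ m', m = m' + 1 := ⟨m - 1, by omega⟩
      have h0 := ih m'
      have h1 := ih (m'+1)
      have h2 := ih (m'+2)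
      simp only [Npath]
      rw [if_neg (by omega)]
      simp only [Nat.add_sub_cancel]
      push_cast at h0 h1 h2 ⊢
      ring_nf at h0 h1 h2 ⊢
      omega

lemma cyc (n : ℕ) : ∀ m : ℕ, (m+1) * S (n+1) ((m:ℤ)+1) = (n+1) * Npath n m := by
  induction n with
  | zero =>
    intro m
    have hrec := S_rec 0 ((m:ℤ)+1)
    rw [S_zero, S_zero, S_zero] at hrec
    rcases Nat.eq_zero_or_pos m with h | h
    · subst h
      norm_num at hrec
      simp only [Npath]
      norm_num
      omega
    · rw [if_neg (by omega), if_neg (by omega), if_neg (by omega)] at hrec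
      have h0 : S (0+1) ((m:ℤ)+1) = 0 := by omega
      rw [h0, Nat.mul_zero]
      simp only [Npath]
      rw [if_neg (by omega : ¬ m = 0)]
  | succ n ih =>
    intro m
    rcases Nat.eq_zero_or_pos m with h | h
    · subst h
      have hrec := S_rec (n+1) (1:ℤ)
      have A := ih 0
      have B := ih 1
      have R := refl_id (n+1) 0
      have D : Npath (n+1) 0 = Npath n 1 + Npath n 0 := by
        simp only [Npath]
        norm_num
      have E4 : (n+2) * Npath (n+1) 0
          = (n+1) * Npath n 1 + (n+1) * Npath n 0 + Npath (n+1) 0 := by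
        rw [D]; ring
      have E1 : (1:ℕ) * S (n+1+1) ((0:ℤ)+1)
          = S (n+1) ((1:ℤ)-1) + S (n+1) (1:ℤ) + S (n+1) ((1:ℤ)+1) := by
        have harg : ((0:ℤ)+1) = 1 := by ring
        rw [harg, hrec]; ring
      have E2 : (2:ℕ) * S (n+1) ((1:ℤ)+1) = 2 * S (n+1) ((1:ℤ)+1) := rfl
      push_cast at A B R E1 E4 ⊢
      ring_nf at A B R E1 E4 ⊢
      omega
    · obtain ⟨m', rfl⟩ : ∃ m', m = m' + 1 := ⟨m - 1, by omega⟩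
      have hrec := S_rec (n+1) ((m':ℤ)+2)
      have A := ih m'
      have B := ih (m'+1)
      have C := ih (m'+2)
      have R := refl_id (n+1) (m'+1)
      have D : Npath (n+1) (m'+1) = Npath n (m'+1+1) + Npath n (m'+1) + Npath n m' := by
        simp only [Npath, if_neg (by omega : ¬ m' + 1 = 0), Nat.add_sub_cancel]
      have E4 : (n+2) * Npath (n+1) (m'+1)
          = (n+1) * Npath n (m'+1+1) + (n+1) * Npath n (m'+1) + (n+1) * Npath n m'
            + Npath (n+1) (m'+1) := by
        rw [D]; ring
      have E1 : (m'+1+1) * S (n+1+1) ((m':ℤ)+2)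
          = (m'+1+1) * S (n+1) ((m':ℤ)+2-1) + (m'+1+1) * S (n+1) ((m':ℤ)+2)
            + (m'+1+1) * S (n+1) ((m':ℤ)+2+1) := by
        rw [hrec]; ring
      have E2 : (m'+1+1) * S (n+1) ((m':ℤ)+1)
          = (m'+1) * S (n+1) ((m':ℤ)+1) + S (n+1) ((m':ℤ)+1) := by ring
      have E3 : (m'+2+1) * S (n+1) ((m':ℤ)+3)
          = (m'+1+1) * S (n+1) ((m':ℤ)+3) + S (n+1) ((m':ℤ)+3) := by ring
      push_cast at A B C R E1 E2 E3 E4 ⊢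
      ring_nf at A B C R E1 E2 E3 E4 hrec ⊢
      omega

lemma fact_div (x y z N : ℕ) (h : x + y + z = N) :
    N.factorial / (x.factorial * y.factorial * z.factorial)
      = N.choose y * (N - y).choose z := by
  have hy : y ≤ N := by omega
  have hz : z ≤ N - y := by omega
  have h1 := Nat.choose_mul_factorial_mul_factorial hy
  have h2 := Nat.choose_mul_factorial_mul_factorial hz
  have hx : N - y - z = x := by omega
  apply Nat.div_eq_of_eq_mul_left
  · positivity
  · rw [hx] at h2
    calc N.factorial = N.choose y * y.factorial * (N - y).factorial := h1.symm
    _ = N.choose y * y.factorial * ((N-y).choose z * z.factorial * x.factorial) := by rw [h2]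
    _ = N.choose y * (N - y).choose z * (x.factorial * y.factorial * z.factorial) := by ring

lemma sum_eq (n m : ℕ) (hm : m ≤ n) :
    (∑ i ∈ Finset.range ((n - m) / 2 + 1),
      (n+1).factorial / ((n - 2*i - m).factorial * i.factorial * (i+m+1).factorial))
      = S (n+1) ((m:ℤ)+1) := by
  have step1 : ∀ i ∈ Finset.range ((n - m) / 2 + 1),
      (n+1).factorial / ((n - 2*i - m).factorial * i.factorial * (i+m+1).factorial)
        = (n+1).choose i * (n+1-i).choose (i+m+1) := by
    intro i hi
    rw [Finset.mem_range] at hi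
    have h2 : 2*i + m ≤ n := by omega
    rw [fact_div (n - 2*i - m) i (i+m+1) (n+1) (by omega)]
  rw [Finset.sum_congr rfl step1]
  have step2 : ∀ i ∈ Finset.range (n+2),
      (n+1).choose i * ch (n+1-i) ((i:ℤ) + ((m:ℤ)+1))
        = (n+1).choose i * (n+1-i).choose (i+m+1) := by
    intro i _
    unfold ch
    rw [if_pos (by omega)]
    have h3 : ((i:ℤ) + ((m:ℤ)+1)).toNat = i+m+1 := by omega
    rw [h3]
  unfold S
  rw [Finset.sum_congr rfl step2]
  apply Finset.sum_subset
  · intro i hi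
    rw [Finset.mem_range] at *
    omega
  · intro i hi1 hi2
    rw [Finset.mem_range] at *
    have : n+1-i < i+m+1 := by omega
    rw [Nat.choose_eq_zero_of_lt this, Nat.mul_zero]


def P (n m : ℕ) (p : Fin (n+1) → ℕ) : Prop :=
  p 0 = 0 ∧ p (Fin.last n) = m ∧
    ∀ i : Fin n, p i.succ = p i.castSucc + 1 ∨ p i.succ = p i.castSucc ∨
      p i.castSucc = p i.succ + 1

lemma P_bounded {n m : ℕ} {p : Fin (n+1) → ℕ} (hp : P n m p) :
    ∀ i : Fin (n+1), p i ≤ i.val := by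
  intro i
  induction i using Fin.induction with
  | zero => simp [hp.1]
  | succ i ihi =>
    have h1 := hp.2.2 i
    have h2 : (i.castSucc : Fin (n+1)).val = i.val := rfl
    have h3 : (i.succ : Fin (n+1)).val = i.val + 1 := rfl
    omega

lemma P_finite (n m : ℕ) (Q : (Fin (n+1) → ℕ) → Prop) (hQ : ∀ p, Q p → P n m p) :
    Finite {p // Q p} := by
  apply Finite.of_injective (f := fun (x : {p // Q p}) (i : Fin (n+1)) =>
    (⟨x.1 i, by
      have := P_bounded (hQ _ x.2) i
      have := i.isLt
      omega⟩ : Fin (n+1)))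
  intro a b h
  apply Subtype.ext
  funext i
  exact congrArg Fin.val (congrFun h i)

/-- second-to-last value -/
def sl {n : ℕ} (p : Fin (n+2) → ℕ) : ℕ := p (Fin.castSucc (Fin.last n))

lemma P_sl {n m : ℕ} {p : Fin (n+2) → ℕ} (hp : P (n+1) m p) :
    m = sl p + 1 ∨ m = sl p ∨ sl p = m + 1 := by
  have h := hp.2.2 (Fin.last n)
  have hl := hp.2.1
  have he : Fin.last (n+1) = (Fin.last n).succ := rfl
  rw [he] at hl
  unfold sl
  omega

def restrictEquiv (n m j : ℕ) (h : m = j + 1 ∨ m = j ∨ j = m + 1) :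
    {p : Fin (n+2) → ℕ // P (n+1) m p ∧ sl p = j} ≃ {q : Fin (n+1) → ℕ // P n j q} where
  toFun x := ⟨fun i => x.1 i.castSucc, by
    refine ⟨?_, x.2.2, ?_⟩
    · show x.1 (Fin.castSucc 0) = 0
      rw [Fin.castSucc_zero]
      exact x.2.1.1
    · intro i
      have hstep := x.2.1.2.2 i.castSucc
      rw [Fin.succ_castSucc] at hstep
      exact hstep⟩
  invFun y := ⟨Fin.snoc y.1 m, by
    refine ⟨⟨?_, ?_, ?_⟩, ?_⟩
    · rw [← Fin.castSucc_zero, Fin.snoc_castSucc]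
      exact y.2.1
    · rw [Fin.snoc_last]
    · intro i
      induction i using Fin.lastCases with
      | last =>
        rw [Fin.succ_last, Fin.snoc_last, Fin.snoc_castSucc]
        have hl := y.2.2.1
        omega
      | cast i =>
        rw [Fin.succ_castSucc, Fin.snoc_castSucc, Fin.snoc_castSucc]
        exact y.2.2.2 i
    · unfold sl
      rw [Fin.snoc_castSucc]
      exact y.2.2.1⟩
  left_inv x := by
    apply Subtype.ext
    funext i
    induction i using Fin.lastCases with
    | last =>
      simp only [Fin.snoc_last]
      exact x.2.1.2.1.symm
    | cast i =>
      simp only [Fin.snoc_castSucc]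
  right_inv y := by
    apply Subtype.ext
    funext i
    simp only [Fin.snoc_castSucc]

def splitEquiv (n m : ℕ) :
    {p : Fin (n+2) → ℕ // P (n+1) m p} ≃
      ({p : Fin (n+2) → ℕ // P (n+1) m p ∧ sl p = m+1} ⊕
       ({p : Fin (n+2) → ℕ // P (n+1) m p ∧ sl p = m} ⊕
        {p : Fin (n+2) → ℕ // P (n+1) m p ∧ sl p + 1 = m})) where
  toFun x :=
    if h1 : sl x.1 = m+1 then Sum.inl ⟨x.1, x.2, h1⟩
    else if h2 : sl x.1 = m then Sum.inr (Sum.inl ⟨x.1, x.2, h2⟩)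
    else Sum.inr (Sum.inr ⟨x.1, x.2, by have := P_sl x.2; omega⟩)
  invFun y :=
    Sum.elim (fun z => ⟨z.1, z.2.1⟩)
      (Sum.elim (fun z => ⟨z.1, z.2.1⟩) (fun z => ⟨z.1, z.2.1⟩)) y
  left_inv x := by
    by_cases h1 : sl x.1 = m+1
    · simp only [dif_pos h1, Sum.elim_inl]
    · by_cases h2 : sl x.1 = m
      · simp only [dif_neg h1, dif_pos h2, Sum.elim_inr, Sum.elim_inl]
      · simp only [dif_neg h1, dif_neg h2, Sum.elim_inr]
  right_inv y := by
    rcases y with z | z | z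
    · rcases z with ⟨p, hp, hj⟩
      simp only [Sum.elim_inl]
      exact dif_pos hj
    · rcases z with ⟨p, hp, hj⟩
      simp only [Sum.elim_inr, Sum.elim_inl]
      exact (dif_neg (show ¬ sl p = m + 1 by omega)).trans (dif_pos hj)
    · rcases z with ⟨p, hp, hj⟩
      simp only [Sum.elim_inr]
      exact (dif_neg (show ¬ sl p = m + 1 by omega)).trans (dif_neg (show ¬ sl p = m by omega))

lemma card_P (n : ℕ) : ∀ m, Nat.card {p : Fin (n+1) → ℕ // P n m p} = Npath n m := by
  induction n with
  | zero =>
    intro m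
    rcases Nat.eq_zero_or_pos m with h | h
    · subst h
      haveI : Unique {p : Fin 1 → ℕ // P 0 0 p} := {
        default := ⟨fun _ => 0, rfl, rfl, fun i => i.elim0⟩
        uniq := fun x => by
          apply Subtype.ext
          funext i
          have hi : i = 0 := Subsingleton.elim i 0
          rw [hi, x.2.1] }
      rw [Nat.card_unique]
      simp [Npath]
    · haveI : IsEmpty {p : Fin 1 → ℕ // P 0 m p} := ⟨fun x => by
        have h1 := x.2.1
        have h2 := x.2.2.1
        have he : Fin.last 0 = 0 := rfl
        rw [he] at h2
        omega⟩
      rw [Nat.card_of_isEmpty]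
      simp only [Npath]
      rw [if_neg (by omega)]
  | succ n ih =>
    intro m
    haveI F1 : Finite {p : Fin (n+2) → ℕ // P (n+1) m p ∧ sl p = m+1} :=
      P_finite (n+1) m _ (fun p hp => hp.1)
    haveI F2 : Finite {p : Fin (n+2) → ℕ // P (n+1) m p ∧ sl p = m} :=
      P_finite (n+1) m _ (fun p hp => hp.1)
    haveI F3 : Finite {p : Fin (n+2) → ℕ // P (n+1) m p ∧ sl p + 1 = m} :=
      P_finite (n+1) m _ (fun p hp => hp.1)
    have hc := Nat.card_congr (splitEquiv n m)
    rw [Nat.card_sum, Nat.card_sum] at hc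
    have c1 : Nat.card {p : Fin (n+2) → ℕ // P (n+1) m p ∧ sl p = m+1} = Npath n (m+1) := by
      rw [Nat.card_congr (restrictEquiv n m (m+1) (by omega))]
      exact ih (m+1)
    have c2 : Nat.card {p : Fin (n+2) → ℕ // P (n+1) m p ∧ sl p = m} = Npath n m := by
      rw [Nat.card_congr (restrictEquiv n m m (by omega))]
      exact ih m
    rcases Nat.eq_zero_or_pos m with hm | hm
    · subst hm
      have c3 : Nat.card {p : Fin (n+2) → ℕ // P (n+1) 0 p ∧ sl p + 1 = 0} = 0 := by
        haveI : IsEmpty {p : Fin (n+2) → ℕ // P (n+1) 0 p ∧ sl p + 1 = 0} :=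
          ⟨fun x => by have := x.2.2; omega⟩
        exact Nat.card_of_isEmpty
      rw [hc, c1, c2, c3]
      simp only [Npath]
      norm_num
    · obtain ⟨m', rfl⟩ : ∃ m', m = m' + 1 := ⟨m - 1, by omega⟩
      have c3 : Nat.card {p : Fin (n+2) → ℕ // P (n+1) (m'+1) p ∧ sl p + 1 = m'+1}
          = Npath n m' := by
        have e : {p : Fin (n+2) → ℕ // P (n+1) (m'+1) p ∧ sl p + 1 = m'+1}
            ≃ {p : Fin (n+2) → ℕ // P (n+1) (m'+1) p ∧ sl p = m'} :=
          Equiv.subtypeEquivRight (fun p => by constructor <;> rintro ⟨a, b⟩ <;> exact ⟨a, by omega⟩)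
        rw [Nat.card_congr e, Nat.card_congr (restrictEquiv n (m'+1) m' (by omega))]
        exact ih m'
      rw [hc, c1, c2, c3]
      simp only [Npath, Nat.add_sub_cancel]
      rw [if_neg (by omega)]
      omega


theorem stmt8 (n₁ m : ℕ) (hm : m ≤ n₁) :
    Nat.card {p : Fin (n₁ + 1) → ℕ //
        p 0 = 0 ∧ p (Fin.last n₁) = m ∧
        ∀ i : Fin n₁, p i.succ = p i.castSucc + 1 ∨ p i.succ = p i.castSucc ∨
          p i.castSucc = p i.succ + 1} =
      (m + 1) *
          (∑ i ∈ Finset.range ((n₁ - m) / 2 + 1),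
            (n₁ + 1).factorial /
              ((n₁ - 2 * i - m).factorial * i.factorial * (i + m + 1).factorial)) /
        (n₁ + 1) := by
  have h1 : Nat.card {p : Fin (n₁ + 1) → ℕ // P n₁ m p} = Npath n₁ m := card_P n₁ m
  have h2 := sum_eq n₁ m hm
  have h3 := cyc n₁ m
  show Nat.card {p : Fin (n₁ + 1) → ℕ // P n₁ m p} = _
  rw [h1, h2, h3, Nat.mul_div_cancel_left _ (by omega : 0 < n₁ + 1)]
end

section
/- Every Motzkin walk of length 2n (viewed as a basis state of (ℂ³)^{⊗2n}) is annihilated by each local projector Π_{j,j+1} summand of the Motzkin Hamiltonian and by the boundary projector; hence the Motzkin state is a frustration-free zero-energy ground state: H|M_{2n}⟩ = 0 with each term ⟨M_{2n}|Π|M_{2n}⟩ = 0. -/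
/-- Basis configurations of a chain of `N` spin-1 particles; the single-site basis
`Fin 3` codes `0 ↦ |u⟩ = |+1⟩`, `1 ↦ |0⟩`, `2 ↦ |d⟩ = |-1⟩`. -/
abbrev Cfg (N : ℕ) := Fin N → Fin 3

/-- The `s^z` eigenvalue of each single-site basis state. -/
def spinval : Fin 3 → ℤ := ![1, 0, -1]

/-- `|D⟩ = (|0d⟩ - |d0⟩)/√2` as a vector on a pair of sites. -/
noncomputable def vD : Fin 3 × Fin 3 → ℂ := fun p =>
  ((if p = (1, 2) then 1 else 0) - (if p = (2, 1) then 1 else 0)) / (Real.sqrt 2 : ℝ)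

/-- `|U⟩ = (|0u⟩ - |u0⟩)/√2` as a vector on a pair of sites. -/
noncomputable def vU : Fin 3 × Fin 3 → ℂ := fun p =>
  ((if p = (1, 0) then 1 else 0) - (if p = (0, 1) then 1 else 0)) / (Real.sqrt 2 : ℝ)

/-- `|φ⟩ = (|00⟩ - |ud⟩)/√2` as a vector on a pair of sites. -/
noncomputable def vPhi : Fin 3 × Fin 3 → ℂ := fun p =>
  ((if p = (1, 1) then 1 else 0) - (if p = (0, 2) then 1 else 0)) / (Real.sqrt 2 : ℝ)

/-- The local projector `Π = |D⟩⟨D| + |U⟩⟨U| + |φ⟩⟨φ|` on two neighboring sites. -/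
noncomputable def localProj : Matrix (Fin 3 × Fin 3) (Fin 3 × Fin 3) ℂ :=
  Matrix.vecMulVec vD (star vD) + Matrix.vecMulVec vU (star vU) +
    Matrix.vecMulVec vPhi (star vPhi)

/-- The projector `Π_{j,j+1}` acting on sites `j, j+1` of the chain and trivially
elsewhere (used only for `j` with `j + 1 < N`). -/
noncomputable def pairEmbed (N : ℕ) (j : ℕ) (hj : j + 1 < N) :
    Matrix (Cfg N) (Cfg N) ℂ :=
  fun x y =>
    (if ∀ k : Fin N, (k : ℕ) ≠ j → (k : ℕ) ≠ j + 1 → x k = y k then 1 else 0) *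
      localProj (x ⟨j, by omega⟩, x ⟨j + 1, hj⟩) (y ⟨j, by omega⟩, y ⟨j + 1, hj⟩)

/-- The boundary projector `Π_boundary = |d⟩₁⟨d| + |u⟩_N⟨u|`. -/
def boundaryProj (N : ℕ) (hN : 0 < N) : Matrix (Cfg N) (Cfg N) ℂ :=
  fun x y =>
    (if x = y ∧ x ⟨0, hN⟩ = 2 then 1 else 0) +
      (if x = y ∧ x ⟨N - 1, by omega⟩ = 0 then 1 else 0)

/-- The Motzkin Hamiltonian `H = ∑_{j=1}^{N-1} Π_{j,j+1} + Π_boundary`. -/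
noncomputable def motzkinH (N : ℕ) (hN : 0 < N) : Matrix (Cfg N) (Cfg N) ℂ :=
  (∑ j ∈ (Finset.range (N - 1)).attach,
      pairEmbed N j (by have := j.2; simp only [Finset.mem_range] at this; omega)) +
    boundaryProj N hN

/-- A configuration is a Motzkin walk: every prefix has at least as many `u`'s as
`d`'s (non-negative partial sums of `s^z` values) and the totals are balanced. -/
def IsMotzkin (N : ℕ) (x : Cfg N) : Prop :=
  (∀ k ∈ Finset.range (N + 1),
      0 ≤ ∑ j ∈ Finset.univ.filter (fun j : Fin N => (j : ℕ) < k), spinval (x j)) ∧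
  ∑ j, spinval (x j) = 0

open scoped Classical in
/-- The (unnormalized) Motzkin state: the uniform superposition of all Motzkin walks. -/
noncomputable def motzkinVec (N : ℕ) : Cfg N → ℂ := fun x =>
  if IsMotzkin N x then 1 else 0


/-! ### Auxiliary development -/

/-- Partial sum of spin values over the first `k` sites. -/
def mzS (N : ℕ) (x : Cfg N) (k : ℕ) : ℤ :=
  ∑ j ∈ Finset.univ.filter (fun j : Fin N => (j : ℕ) < k), spinval (x j)

lemma mzS_succ (N : ℕ) (x : Cfg N) (k : ℕ) (h : k < N) :
    mzS N x (k + 1) = mzS N x k + spinval (x ⟨k, h⟩) := by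
  unfold mzS
  have : (Finset.univ.filter (fun j : Fin N => (j : ℕ) < k + 1)) =
      insert ⟨k, h⟩ (Finset.univ.filter (fun j : Fin N => (j : ℕ) < k)) := by
    ext m
    simp only [Finset.mem_filter, Finset.mem_univ, true_and, Finset.mem_insert,
      Fin.ext_iff]
    omega
  rw [this, Finset.sum_insert (by simp)]
  ring

lemma mzS_stable (N : ℕ) (x : Cfg N) (k : ℕ) (h : N ≤ k) : mzS N x k = mzS N x N := by
  unfold mzS
  congr 1
  ext m
  have := m.isLt
  simp only [Finset.mem_filter, Finset.mem_univ, true_and]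
  omega

lemma mzS_total (N : ℕ) (x : Cfg N) : mzS N x N = ∑ j, spinval (x j) := by
  unfold mzS
  rw [Finset.filter_true_of_mem (fun m _ => m.isLt)]

lemma mzS_congr (N : ℕ) (x y : Cfg N) (k : ℕ)
    (h : ∀ m : Fin N, (m : ℕ) < k → x m = y m) : mzS N x k = mzS N y k := by
  unfold mzS
  exact Finset.sum_congr rfl (fun m hm => by rw [h m (by simpa using hm)])

lemma isMotzkin_iff (N : ℕ) (x : Cfg N) :
    IsMotzkin N x ↔ (∀ k, k ≤ N → 0 ≤ mzS N x k) ∧ mzS N x N = 0 := by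
  unfold IsMotzkin
  rw [mzS_total]
  constructor
  · rintro ⟨h1, h2⟩
    exact ⟨fun k hk => h1 k (Finset.mem_range.2 (by omega)), h2⟩
  · rintro ⟨h1, h2⟩
    exact ⟨fun k hk => h1 k (by simp at hk; omega), h2⟩

/-- Update two neighboring sites of a configuration. -/
def upd (N j : ℕ) (hj : j + 1 < N) (x : Cfg N) (a b : Fin 3) : Cfg N :=
  Function.update (Function.update x ⟨j, by omega⟩ a) ⟨j + 1, hj⟩ b

lemma upd_at_j (N j : ℕ) (hj : j + 1 < N) (x : Cfg N) (a b : Fin 3) :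
    upd N j hj x a b ⟨j, by omega⟩ = a := by
  unfold upd
  rw [Function.update_of_ne (by simp [Fin.ext_iff]), Function.update_self]

lemma upd_at_j1 (N j : ℕ) (hj : j + 1 < N) (x : Cfg N) (a b : Fin 3) :
    upd N j hj x a b ⟨j + 1, hj⟩ = b := by
  unfold upd
  rw [Function.update_self]

lemma upd_ne (N j : ℕ) (hj : j + 1 < N) (x : Cfg N) (a b : Fin 3) (m : Fin N)
    (h1 : (m : ℕ) ≠ j) (h2 : (m : ℕ) ≠ j + 1) :
    upd N j hj x a b m = x m := by
  unfold upd
  rw [Function.update_of_ne (by simp [Fin.ext_iff]; omega),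
    Function.update_of_ne (by simp [Fin.ext_iff]; omega)]

lemma mzS_upd_eq (N j : ℕ) (hj : j + 1 < N) (x : Cfg N) (a b a' b' : Fin 3)
    (hs : spinval a + spinval b = spinval a' + spinval b') (k : ℕ) (hk : k ≠ j + 1) :
    mzS N (upd N j hj x a b) k = mzS N (upd N j hj x a' b') k := by
  rcases Nat.lt_or_ge k (j + 1) with h | h
  · exact mzS_congr _ _ _ _ (fun m hm => by
      rw [upd_ne _ _ _ _ _ _ _ (by omega) (by omega),
          upd_ne _ _ _ _ _ _ _ (by omega) (by omega)])
  · have h2 : j + 2 ≤ k := by omega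
    rcases Nat.lt_or_ge k (N + 1) with hkN | hkN
    · induction k, h2 using Nat.le_induction with
      | base =>
        have hjN : j < N := by omega
        rw [mzS_succ _ _ _ hj, mzS_succ _ _ _ hjN, mzS_succ _ _ _ hj, mzS_succ _ _ _ hjN,
          upd_at_j, upd_at_j, upd_at_j1, upd_at_j1,
          mzS_congr N (upd N j hj x a b) (upd N j hj x a' b') j (fun m hm => by
            rw [upd_ne _ _ _ _ _ _ _ (by omega) (by omega),
              upd_ne _ _ _ _ _ _ _ (by omega) (by omega)])]
        omega
      | succ k hk2 ih =>
        have hkN' : k < N := by omega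
        rw [mzS_succ _ _ _ hkN', mzS_succ _ _ _ hkN',
          upd_ne _ _ _ _ _ _ _ (by simp only [Fin.val_mk]; omega)
            (by simp only [Fin.val_mk]; omega),
          upd_ne _ _ _ _ _ _ _ (by simp only [Fin.val_mk]; omega)
            (by simp only [Fin.val_mk]; omega),
          ih (by omega) (by omega) (by omega)]
    · have hN2 : j + 2 ≤ N := by omega
      rw [mzS_stable _ _ k (by omega), mzS_stable _ _ k (by omega),
        mzS_upd_eq N j hj x a b a' b' hs N (by omega)]

lemma move_mono (N j : ℕ) (hj : j + 1 < N) (x : Cfg N) (a b a' b' : Fin 3)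
    (hs : spinval a + spinval b = spinval a' + spinval b')
    (h1 : ∀ s : ℤ, 0 ≤ s → 0 ≤ s + spinval a + spinval b → 0 ≤ s + spinval a')
    (hM : IsMotzkin N (upd N j hj x a b)) : IsMotzkin N (upd N j hj x a' b') := by
  rw [isMotzkin_iff] at hM ⊢
  obtain ⟨hp, ht⟩ := hM
  have hSN : mzS N (upd N j hj x a' b') N = mzS N (upd N j hj x a b) N :=
    (mzS_upd_eq N j hj x a b a' b' hs N (by omega)).symm
  refine ⟨fun k hk => ?_, by rw [hSN]; exact ht⟩
  rcases eq_or_ne k (j + 1) with rfl | hne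
  · have e1 : mzS N (upd N j hj x a' b') (j + 1)
        = mzS N (upd N j hj x a' b') j + spinval a' := by
      rw [mzS_succ _ _ _ (by omega)]
      congr 1
      exact congrArg spinval (upd_at_j N j hj x a' b')
    have e2 : mzS N (upd N j hj x a' b') j = mzS N (upd N j hj x a b) j :=
      (mzS_upd_eq N j hj x a b a' b' hs j (by omega)).symm
    have e3 : mzS N (upd N j hj x a b) (j + 2)
        = mzS N (upd N j hj x a b) j + spinval a + spinval b := by
      rw [show j + 2 = (j + 1) + 1 from rfl, mzS_succ _ _ _ hj, mzS_succ _ _ _ (by omega),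
        upd_at_j1]
      congr 2
      exact congrArg spinval (upd_at_j N j hj x a b)
    have g1 : (0 : ℤ) ≤ mzS N (upd N j hj x a b) j := hp j (by omega)
    have g2 : (0 : ℤ) ≤ mzS N (upd N j hj x a b) (j + 2) := hp (j + 2) (by omega)
    rw [e1, e2]
    exact h1 _ g1 (by rw [← e3]; exact g2)
  · rw [← mzS_upd_eq N j hj x a b a' b' hs k hne]
    exact hp k hk

lemma move_iff (N j : ℕ) (hj : j + 1 < N) (x : Cfg N) (a b a' b' : Fin 3)
    (hs : spinval a + spinval b = spinval a' + spinval b')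
    (h1 : ∀ s : ℤ, 0 ≤ s → 0 ≤ s + spinval a + spinval b → 0 ≤ s + spinval a')
    (h2 : ∀ s : ℤ, 0 ≤ s → 0 ≤ s + spinval a' + spinval b' → 0 ≤ s + spinval a) :
    IsMotzkin N (upd N j hj x a b) ↔ IsMotzkin N (upd N j hj x a' b') :=
  ⟨move_mono N j hj x a b a' b' hs h1, move_mono N j hj x a' b' a b hs.symm h2⟩

lemma mv_congr {N : ℕ} {x y : Cfg N} (h : IsMotzkin N x ↔ IsMotzkin N y) :
    motzkinVec N x = motzkinVec N y := by
  classical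
  unfold motzkinVec
  by_cases hx : IsMotzkin N x
  · rw [if_pos hx, if_pos (h.mp hx)]
  · rw [if_neg hx, if_neg (fun hy => hx (h.mpr hy))]

lemma sum_star_vD (f : Fin 3 × Fin 3 → ℂ) (h : f (1, 2) = f (2, 1)) :
    ∑ p, star (vD p) * f p = 0 := by
  rw [Fintype.sum_prod_type]
  simp only [Fin.sum_univ_three, vD, Prod.mk.injEq, Fin.reduceEq]
  norm_num [map_div₀, Complex.conj_ofReal]
  linear_combination ((Real.sqrt 2 : ℝ) : ℂ)⁻¹ * h

lemma sum_star_vU (f : Fin 3 × Fin 3 → ℂ) (h : f (1, 0) = f (0, 1)) :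
    ∑ p, star (vU p) * f p = 0 := by
  rw [Fintype.sum_prod_type]
  simp only [Fin.sum_univ_three, vU, Prod.mk.injEq, Fin.reduceEq]
  norm_num [map_div₀, Complex.conj_ofReal]
  linear_combination ((Real.sqrt 2 : ℝ) : ℂ)⁻¹ * h

lemma sum_star_vPhi (f : Fin 3 × Fin 3 → ℂ) (h : f (1, 1) = f (0, 2)) :
    ∑ p, star (vPhi p) * f p = 0 := by
  rw [Fintype.sum_prod_type]
  simp only [Fin.sum_univ_three, vPhi, Prod.mk.injEq, Fin.reduceEq]
  norm_num [map_div₀, Complex.conj_ofReal]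
  linear_combination ((Real.sqrt 2 : ℝ) : ℂ)⁻¹ * h

lemma localProj_sum (q : Fin 3 × Fin 3) (f : Fin 3 × Fin 3 → ℂ)
    (h1 : f (1, 2) = f (2, 1)) (h2 : f (1, 0) = f (0, 1)) (h3 : f (1, 1) = f (0, 2)) :
    ∑ p, localProj q p * f p = 0 := by
  have e : ∀ p, localProj q p * f p
      = vD q * (star (vD p) * f p) + vU q * (star (vU p) * f p)
        + vPhi q * (star (vPhi p) * f p) := by
    intro p
    simp [localProj, Matrix.vecMulVec_apply]
    ring
  simp only [e, Finset.sum_add_distrib, ← Finset.mul_sum]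
  rw [sum_star_vD f h1, sum_star_vU f h2, sum_star_vPhi f h3]
  ring

lemma sum_mulVec {m n : Type*} [Fintype n] {ι : Type*} (s : Finset ι)
    (A : ι → Matrix m n ℂ) (v : n → ℂ) :
    (∑ i ∈ s, A i).mulVec v = ∑ i ∈ s, (A i).mulVec v :=
  map_sum (Matrix.mulVec.addMonoidHomLeft v) A s

lemma pair_annihilate (N j : ℕ) (hj : j + 1 < N) :
    Matrix.mulVec (pairEmbed N j hj) (motzkinVec N) = 0 := by
  classical
  funext x
  set e : Fin 3 × Fin 3 → Cfg N := fun p => upd N j hj x p.1 p.2 with he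
  have einj : Function.Injective e := by
    intro p q hpq
    have h1 := congrFun hpq ⟨j, by omega⟩
    have h2 := congrFun hpq ⟨j + 1, hj⟩
    simp only [he, upd_at_j, upd_at_j1] at h1 h2
    exact Prod.ext h1 h2
  show ∑ y, pairEmbed N j hj x y * motzkinVec N y = 0
  have hvan : ∀ y ∈ Finset.univ, y ∉ Finset.image e Finset.univ →
      pairEmbed N j hj x y * motzkinVec N y = 0 := by
    intro y _ hy
    have hc : ¬ (∀ k : Fin N, (k : ℕ) ≠ j → (k : ℕ) ≠ j + 1 → x k = y k) := by
      intro hcond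
      apply hy
      refine Finset.mem_image.2 ⟨(y ⟨j, by omega⟩, y ⟨j + 1, hj⟩), Finset.mem_univ _, ?_⟩
      funext k
      simp only [he]
      rcases eq_or_ne (k : ℕ) j with hk | hk
      · rw [show k = (⟨j, by omega⟩ : Fin N) from Fin.ext hk]
        exact upd_at_j N j hj x _ _
      · rcases eq_or_ne (k : ℕ) (j + 1) with hk1 | hk1
        · rw [show k = (⟨j + 1, hj⟩ : Fin N) from Fin.ext hk1]
          exact upd_at_j1 N j hj x _ _
        · rw [upd_ne N j hj x _ _ k hk hk1]
          exact hcond k hk hk1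
    simp [pairEmbed, hc]
  rw [← Finset.sum_subset (Finset.subset_univ _) hvan,
    Finset.sum_image (fun p _ q _ h => einj h)]
  · have hval : ∀ p : Fin 3 × Fin 3,
        pairEmbed N j hj x (e p) = localProj (x ⟨j, by omega⟩, x ⟨j + 1, hj⟩) p := by
      intro p
      have hcond : ∀ k : Fin N, (k : ℕ) ≠ j → (k : ℕ) ≠ j + 1 → x k = e p k :=
        fun k hk1 hk2 => (upd_ne N j hj x p.1 p.2 k hk1 hk2).symm
      simp only [pairEmbed, if_pos hcond, one_mul, he, upd_at_j, upd_at_j1]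
      have hc' : ∀ k : Fin N, (k : ℕ) ≠ j → (k : ℕ) ≠ j + 1 → x k = upd N j hj x p.1 p.2 k := hcond
      rw [if_pos hc', one_mul]
    simp only [hval]
    apply localProj_sum
    · exact mv_congr (move_iff N j hj x 1 2 2 1 (by decide)
        (fun s hs1 hs2 => by simp only [spinval] at hs2 ⊢; norm_num at hs2 ⊢; omega)
        (fun s hs1 hs2 => by simp only [spinval] at hs2 ⊢; norm_num at hs2 ⊢; omega))
    · exact mv_congr (move_iff N j hj x 1 0 0 1 (by decide)
        (fun s hs1 hs2 => by simp only [spinval] at hs2 ⊢; norm_num at hs2 ⊢; omega)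
        (fun s hs1 hs2 => by simp only [spinval] at hs2 ⊢; norm_num at hs2 ⊢; omega))
    · exact mv_congr (move_iff N j hj x 1 1 0 2 (by decide)
        (fun s hs1 hs2 => by simp only [spinval] at hs2 ⊢; norm_num at hs2 ⊢; omega)
        (fun s hs1 hs2 => by simp only [spinval] at hs2 ⊢; norm_num at hs2 ⊢; omega))

lemma boundary_annihilate (N : ℕ) (hN : 0 < N) :
    Matrix.mulVec (boundaryProj N hN) (motzkinVec N) = 0 := by
  classical
  funext x
  show ∑ y, boundaryProj N hN x y * motzkinVec N y = 0
  rw [Finset.sum_eq_single x (fun y _ hy => by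
      have hxy : x ≠ y := fun h => hy h.symm
      simp [boundaryProj, hxy]) (by simp)]
  by_cases hM : IsMotzkin N x
  · rw [isMotzkin_iff] at hM
    obtain ⟨hp, ht⟩ := hM
    have hx0 : x ⟨0, hN⟩ ≠ 2 := by
      intro h0
      have h1 := hp 1 (by omega)
      have h00 : mzS N x 0 = 0 := by simp [mzS]
      rw [mzS_succ N x 0 hN, h0, h00] at h1
      norm_num [show spinval 2 = -1 from rfl] at h1
    have hxN : x ⟨N - 1, by omega⟩ ≠ 0 := by
      intro h0
      have hlt : N - 1 < N := by omega
      have h1 := hp (N - 1) (by omega)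
      have hstep := mzS_succ N x (N - 1) hlt
      rw [show N - 1 + 1 = N by omega, ht, h0] at hstep
      norm_num [spinval] at hstep
      omega
    simp [boundaryProj, hx0, hxN]
  · simp [motzkinVec, hM]


/-- Every local projector `Π_{j,j+1}` and the boundary projector annihilate the
Motzkin state, hence the Motzkin state is a frustration-free zero-energy ground
state: `H |M⟩ = 0` with each term contributing zero energy. -/
theorem stmt12 (n : ℕ) (hn : 0 < n) :
    (∀ (j : ℕ) (hj : j + 1 < 2 * n),
        Matrix.mulVec (pairEmbed (2 * n) j hj) (motzkinVec (2 * n)) = 0) ∧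
    Matrix.mulVec (boundaryProj (2 * n) (by omega)) (motzkinVec (2 * n)) = 0 ∧
    Matrix.mulVec (motzkinH (2 * n) (by omega)) (motzkinVec (2 * n)) = 0 := by
  refine ⟨fun j hj => pair_annihilate (2 * n) j hj, boundary_annihilate (2 * n) (by omega), ?_⟩
  rw [motzkinH, Matrix.add_mulVec, sum_mulVec, boundary_annihilate]
  rw [add_zero]
  exact Finset.sum_eq_zero (fun j _ => pair_annihilate (2 * n) j _)
end
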